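/- Let $\lambda>0$, let $d\geq 1$ and $d_0\geq 1$ be integers, set $n=d+d_0$, let $k\in\mathbb{N}$ and let $\alpha\in\mathbb{R}$ with $\alpha>n\lambda$. Define $F(u)=-\tfrac{1}{\lambda}\log(1-u)$ for $u\in(0,1)$ and $H(u)=e^{-\alpha F(u)}\,F'(u)^{d_0-1}\,(F'(u)+u F''(u))\,(1+\lambda u F'(u))^{d}$. Then $\frac{\Gamma(k+1)}{\Gamma(k+d_0)}\int_0^1 u^{k+d_0-1}H(u)\,du=\frac{\Gamma(k+1)\,\Gamma(\alpha/\lambda-n)}{\lambda^{d_0}\,\Gamma(\alpha/\lambda+k-d)}$. -/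

import Mathlib

open Real MeasureTheory Set

lemma betaReal (a b : ℝ) (ha : 0 < a) (hb : 0 < b) :
    ∫ x in Ioo (0:ℝ) 1, x ^ (a-1) * (1-x) ^ (b-1)
      = Real.Gamma a * Real.Gamma b / Real.Gamma (a+b) := by
  have h1 : Complex.betaIntegral a b
      = ((∫ x in Ioo (0:ℝ) 1, x ^ (a-1) * (1-x) ^ (b-1) : ℝ) : ℂ) := by
    rw [Complex.betaIntegral,
      show (∫ x in Ioo (0:ℝ) 1, x ^ (a-1) * (1-x) ^ (b-1))
        = ∫ x in (0:ℝ)..1, x ^ (a-1) * (1-x) ^ (b-1) by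
        rw [intervalIntegral.integral_of_le zero_le_one,
          MeasureTheory.integral_Ioc_eq_integral_Ioo],
      ← intervalIntegral.integral_ofReal]
    refine intervalIntegral.integral_congr (fun x hx => ?_)
    rw [uIcc_of_le zero_le_one] at hx
    have h1x : (0:ℝ) ≤ 1 - x := by linarith [hx.2]
    rw [Complex.ofReal_mul, Complex.ofReal_cpow hx.1, Complex.ofReal_cpow h1x]
    push_cast
    ring
  have hG : Real.Gamma (a + b) ≠ 0 := (Real.Gamma_pos_of_pos (by linarith)).ne'
  have h2 := Complex.Gamma_mul_Gamma_eq_betaIntegral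
    (show 0 < (a:ℂ).re by simpa using ha) (show 0 < (b:ℂ).re by simpa using hb)
  rw [h1, show ((a:ℂ)+b) = ((a+b:ℝ):ℂ) by push_cast; ring, Complex.Gamma_ofReal,
    Complex.Gamma_ofReal, Complex.Gamma_ofReal] at h2
  have h4 : Real.Gamma a * Real.Gamma b
      = Real.Gamma (a+b) * ∫ x in Ioo (0:ℝ) 1, x ^ (a-1) * (1-x) ^ (b-1) := by
    exact_mod_cast h2
  field_simp
  linarith [h4]

/-- the fibre weight `ψ(α,k)` for the ball subbundle case, base
dimension `d > 0`, `F(u) = -(1/λ) log(1-u)`. -/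
theorem stmt_1 (lam : ℝ) (hlam : 0 < lam) (d d0 : ℕ) (hd : 1 ≤ d) (hd0 : 1 ≤ d0)
    (n : ℕ) (hn : n = d + d0) (k : ℕ) (α : ℝ) (hα : (n : ℝ) * lam < α)
    (F : ℝ → ℝ) (hF : ∀ u ∈ Ioo (0 : ℝ) 1, F u = -(1 / lam) * Real.log (1 - u))
    (H : ℝ → ℝ)
    (hH : ∀ u ∈ Ioo (0 : ℝ) 1,
      H u = Real.exp (-(α * F u)) * (deriv F u) ^ (d0 - 1) *
        (deriv F u + u * deriv (deriv F) u) * (1 + lam * u * deriv F u) ^ d) :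
    Real.Gamma (k + 1) / Real.Gamma (k + d0) *
        ∫ u in Ioo (0 : ℝ) 1, u ^ (k + d0 - 1) * H u =
      Real.Gamma (k + 1) * Real.Gamma (α / lam - n) /
        (lam ^ d0 * Real.Gamma (α / lam + k - d)) := by
  obtain ⟨m, rfl⟩ : ∃ m, d0 = m + 1 := ⟨d0 - 1, by omega⟩
  subst hn
  have hlam' : lam ≠ 0 := hlam.ne'
  -- derivative formulas
  have hd1 : ∀ u ∈ Ioo (0:ℝ) 1, deriv F u = (lam * (1-u))⁻¹ := by
    intro u hu
    have h1u : 1 - u ≠ 0 := by have := hu.2; intro h; linarith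
    have hev : F =ᶠ[nhds u] fun v => -(1 / lam) * Real.log (1 - v) :=
      Filter.eventuallyEq_of_mem (isOpen_Ioo.mem_nhds hu) hF
    rw [hev.deriv_eq]
    have hder : HasDerivAt (fun v => -(1 / lam) * Real.log (1 - v))
        (-(1 / lam) * ((1-u)⁻¹ * (-1))) u := by
      have h2 : HasDerivAt (fun v : ℝ => 1 - v) (-1) u := by
        simpa using (hasDerivAt_id u).const_sub 1
      exact ((Real.hasDerivAt_log h1u).comp u h2).const_mul _
    rw [hder.deriv]
    field_simp
  have hd2 : ∀ u ∈ Ioo (0:ℝ) 1, deriv (deriv F) u = (lam * (1-u)^2)⁻¹ := by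
    intro u hu
    have h1u : 1 - u ≠ 0 := by have := hu.2; intro h; linarith
    have hev : deriv F =ᶠ[nhds u] fun v => (lam * (1-v))⁻¹ :=
      Filter.eventuallyEq_of_mem (isOpen_Ioo.mem_nhds hu) hd1
    rw [hev.deriv_eq]
    have hder : HasDerivAt (fun v => (lam * (1-v))⁻¹)
        (-(lam * (-1)) / (lam * (1-u))^2) u := by
      have h2 : HasDerivAt (fun v : ℝ => lam * (1 - v)) (lam * (-1)) u := by
        simpa using ((hasDerivAt_id u).const_sub 1).const_mul lam
      exact h2.inv (by positivity)
    rw [hder.deriv]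
    field_simp
  set a : ℝ := (k : ℝ) + (m + 1 : ℕ) with ha_def
  set b : ℝ := α / lam - ((d + (m+1) : ℕ) : ℝ) with hb_def
  have ha : 0 < a := by positivity
  have hb : 0 < b := by
    rw [hb_def, sub_pos, lt_div_iff₀ hlam]
    exact hα
  -- pointwise identity of the integrand
  have hpt : ∀ u ∈ Ioo (0:ℝ) 1,
      u ^ (k + (m+1) - 1) * H u = lam⁻¹ ^ (m+1) * (u ^ (a-1) * (1-u) ^ (b-1)) := by
    intro u hu
    have hu0 : 0 < u := hu.1
    have h1u : 0 < 1 - u := by have := hu.2; linarith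
    rw [hH u hu, hd1 u hu, hd2 u hu, hF u hu]
    have hexp : Real.exp (-(α * (-(1 / lam) * Real.log (1 - u)))) = (1-u) ^ (α/lam) := by
      rw [Real.rpow_def_of_pos h1u]
      congr 1
      field_simp
    rw [hexp]
    have hmid : (lam * (1-u))⁻¹ + u * (lam * (1-u)^2)⁻¹ = (lam * (1-u)^2)⁻¹ := by
      field_simp
      ring
    have hlast : 1 + lam * u * (lam * (1-u))⁻¹ = (1-u)⁻¹ := by
      field_simp
      ring
    rw [hmid, hlast]
    simp only [mul_inv, mul_pow, inv_pow]
    have hb1 : (1-u) ^ (b-1) = (1-u) ^ (α/lam) / (1-u) ^ (d + (m+1) + 1 : ℕ) := by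
      rw [show b - 1 = α/lam - ((d + (m+1) + 1 : ℕ) : ℝ) by
        rw [hb_def]; push_cast; ring]
      rw [Real.rpow_sub h1u, Real.rpow_natCast]
    have ha1 : u ^ (a-1) = u ^ (k + m : ℕ) := by
      rw [show a - 1 = ((k + m : ℕ) : ℝ) by rw [ha_def]; push_cast; ring,
        Real.rpow_natCast]
    rw [hb1, ha1]
    have hrp : (0:ℝ) < (1-u) ^ (α/lam) := Real.rpow_pos_of_pos h1u _
    simp only [show k + (m+1) - 1 = k + m by omega, Nat.add_sub_cancel]
    field_simp
    ring
  -- compute the integral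
  have hint : (∫ u in Ioo (0:ℝ) 1, u ^ (k + (m+1) - 1) * H u)
      = lam⁻¹ ^ (m+1) * (Real.Gamma a * Real.Gamma b / Real.Gamma (a+b)) := by
    rw [setIntegral_congr_fun measurableSet_Ioo hpt, MeasureTheory.integral_const_mul,
      betaReal a b ha hb]
  rw [hint]
  have hab : a + b = α / lam + k - d := by rw [ha_def, hb_def]; push_cast; ring
  rw [hab]
  have hbg : Real.Gamma b = Real.Gamma (α / lam - ((d:ℝ) + ((m:ℝ)+1))) := by
    rw [hb_def]; push_cast; ring_nf
  have hGk : Real.Gamma ((k:ℝ) + ((m:ℝ)+1)) ≠ 0 :=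
    (Real.Gamma_pos_of_pos (by positivity)).ne'
  have hGab : Real.Gamma (α / lam + k - d) ≠ 0 := by
    rw [← hab]; exact (Real.Gamma_pos_of_pos (by linarith)).ne'
  have hGa : Real.Gamma a ≠ 0 := (Real.Gamma_pos_of_pos ha).ne'
  show Real.Gamma (k + 1) / Real.Gamma a *
      (lam⁻¹ ^ (m+1) * (Real.Gamma a * Real.Gamma b / Real.Gamma (α / lam + k - d)))
    = Real.Gamma (k + 1) * Real.Gamma b / (lam ^ (m+1) * Real.Gamma (α / lam + k - d))
  set G1 := Real.Gamma ((k:ℝ) + 1) with hG1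
  set Ga := Real.Gamma a with hGa'
  set Gb := Real.Gamma b with hGb'
  set Gs := Real.Gamma (α / lam + k - d) with hGs'
  rw [inv_pow]
  field_simp
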